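/- Let (ζ_k)_{k∈ℕ} be i.i.d. real random variables with E(|ζ_1|^ℓ) < ∞ for some ℓ ∈ ℕ and E(ζ_1) = 0. Then there exists a real polynomial R of degree at most ⌊ℓ/2⌋ such that E((ζ_1 + ⋯ + ζ_N)^ℓ) = R(N) for all N ∈ ℕ with N ≥ ℓ. -/

import Mathlib

open MeasureTheory ProbabilityTheory Polynomial

private lemma descPoch_diff (n : ℕ) (x : ℝ) :
    (descPochhammer ℝ (n+1)).eval (x+1) - (descPochhammer ℝ (n+1)).eval x
      = ((n:ℝ)+1) * (descPochhammer ℝ n).eval x := by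
  have h1 : (descPochhammer ℝ (n+1)).eval (x+1) = (x+1) * (descPochhammer ℝ n).eval x := by
    conv_lhs => rw [descPochhammer_succ_left]
    simp [eval_comp]
  rw [h1, descPochhammer_succ_eval]
  ring

private lemma exists_discrete_antideriv : ∀ (n : ℕ) (Q : Polynomial ℝ), Q.natDegree ≤ n →
    ∃ P : Polynomial ℝ, P.natDegree ≤ Q.natDegree + 1 ∧ (Q = 0 → P = 0) ∧
      ∀ x : ℝ, P.eval (x + 1) - P.eval x = Q.eval x := by
  intro n
  induction n with
  | zero =>
    intro Q hQ
    by_cases h0 : Q = 0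
    · exact ⟨0, by simp, fun _ => rfl, by simp [h0]⟩
    refine ⟨C (Q.coeff 0) * X, ?_, fun h => absurd h h0, ?_⟩
    · exact (natDegree_C_mul_le _ _).trans (by simp)
    · intro x
      have hc : Q = C (Q.coeff 0) := Polynomial.eq_C_of_natDegree_le_zero hQ
      rw [hc]; simp; ring
  | succ n ih =>
    intro Q hQn
    by_cases hQ : Q = 0
    · exact ⟨0, by simp, fun _ => rfl, by simp [hQ]⟩
    by_cases hn : Q.natDegree ≤ n
    · exact ih Q hn
    have hdeg : Q.natDegree = n + 1 := le_antisymm hQn (not_le.mp hn)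
    set a := Q.leadingCoeff with ha
    have ha0 : a ≠ 0 := leadingCoeff_ne_zero.mpr hQ
    set Q' := Q - C a * descPochhammer ℝ (n+1) with hQ'
    have hmono : (descPochhammer ℝ (n+1)).Monic := monic_descPochhammer ℝ (n+1)
    have hQ'deg : Q'.natDegree ≤ n := by
      rcases eq_or_ne Q' 0 with h | h
      · simp [h]
      have hlt : Q'.degree < Q.degree := by
        apply Polynomial.degree_sub_lt _ hQ
        · rw [leadingCoeff_mul, leadingCoeff_C, hmono.leadingCoeff, mul_one]
        · rw [degree_C_mul ha0, degree_eq_natDegree hmono.ne_zero,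
            degree_eq_natDegree hQ, descPochhammer_natDegree, hdeg]
      have := Polynomial.natDegree_lt_natDegree h hlt
      omega
    obtain ⟨P', hP'deg, -, hP'⟩ := ih Q' hQ'deg
    refine ⟨C (a / ((n:ℝ)+2)) * descPochhammer ℝ (n+2) + P', ?_, fun h => absurd h hQ, ?_⟩
    · apply (natDegree_add_le _ _).trans
      apply max_le
      · exact (natDegree_C_mul_le _ _).trans (by rw [descPochhammer_natDegree]; omega)
      · omega
    · intro x
      have h2 : ((n:ℝ)+2) ≠ 0 := by positivity
      have key := descPoch_diff (n+1) x
      push_cast at key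
      have hq' := hP' x
      rw [hQ'] at hq'
      simp only [eval_add, eval_mul, eval_C, eval_sub] at hq' ⊢
      have : a / ((n:ℝ)+2) * (descPochhammer ℝ (n+2)).eval (x+1)
          - a / ((n:ℝ)+2) * (descPochhammer ℝ (n+2)).eval x
          = a * (descPochhammer ℝ (n+1)).eval x := by
        rw [← mul_sub]
        rw [show (n+2) = (n+1)+1 from rfl] at *
        rw [key]
        field_simp
        ring
      nlinarith [this, hq']

theorem stmt_8 {Ω : Type*} {m0 : MeasurableSpace Ω} (μ : Measure Ω)
    [IsProbabilityMeasure μ] (ζ : ℕ → Ω → ℝ) (ℓ : ℕ)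
    (hmeas : ∀ k, Measurable (ζ k))
    (hindep : iIndepFun ζ μ)
    (hident : ∀ k, IdentDistrib (ζ k) (ζ 0) μ μ)
    (hmean : ∫ ω, ζ 0 ω ∂μ = 0)
    (hmom : Integrable (fun ω => |ζ 0 ω| ^ ℓ) μ) :
    ∃ R : Polynomial ℝ, R.natDegree ≤ ℓ / 2 ∧
      ∀ N : ℕ, ℓ ≤ N →
        ∫ ω, (∑ k ∈ Finset.range N, ζ k ω) ^ ℓ ∂μ = R.eval (N : ℝ) := by
  classical
  set m : ℕ → ℝ := fun j => ∫ ω, (ζ 0 ω) ^ j ∂μ with hm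
  have hm0 : m 0 = 1 := by simp [hm]
  have hm1 : m 1 = 0 := by simpa [hm] using hmean
  -- integrability of moments of ζ 0
  have hint0 : ∀ j, j ≤ ℓ → Integrable (fun ω => (ζ 0 ω) ^ j) μ := by
    intro j hj
    have hb : Integrable (fun ω => 1 + |ζ 0 ω| ^ ℓ) μ := (integrable_const 1).add hmom
    refine hb.mono' ((hmeas 0).pow_const j).aestronglyMeasurable ?_
    filter_upwards with ω
    rw [Real.norm_eq_abs, abs_pow]
    rcases le_total (|ζ 0 ω|) 1 with h | h
    · have h1 : |ζ 0 ω| ^ j ≤ 1 := pow_le_one₀ (abs_nonneg _) h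
      have h2 : (0:ℝ) ≤ |ζ 0 ω| ^ ℓ := by positivity
      linarith
    · have h1 : |ζ 0 ω| ^ j ≤ |ζ 0 ω| ^ ℓ := pow_le_pow_right₀ h hj
      linarith
  have hintk : ∀ k j, j ≤ ℓ → Integrable (fun ω => (ζ k ω) ^ j) μ := by
    intro k j hj
    exact ((hident k).comp (measurable_id.pow_const j)).integrable_iff.mpr (hint0 j hj)
  have hmomk : ∀ k j, (∫ ω, (ζ k ω) ^ j ∂μ) = m j := fun k j =>
    ((hident k).comp (measurable_id.pow_const j)).integral_eq
  -- partial sums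
  set S : ℕ → Ω → ℝ := fun N ω => ∑ k ∈ Finset.range N, ζ k ω with hS
  have hSeq : ∀ N, S N = ∑ k ∈ Finset.range N, ζ k := by
    intro N; funext ω; simp [hS]
  have hSindep : ∀ N, IndepFun (S N) (ζ N) μ := by
    intro N; rw [hSeq]
    exact hindep.indepFun_finsetSum_of_notMem hmeas Finset.notMem_range_self
  have hSsucc : ∀ N ω, S (N+1) ω = S N ω + ζ N ω := by
    intro N ω; simp [hS, Finset.sum_range_succ]
  -- integrability of powers of S N
  have hSint : ∀ N j, j ≤ ℓ → Integrable (fun ω => (S N ω)^j) μ := by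
    intro N
    induction N with
    | zero =>
      intro j hj
      have : (fun ω => (S 0 ω)^j) = fun _ => (0:ℝ)^j := by funext ω; simp [hS]
      rw [this]; exact integrable_const _
    | succ N ih =>
      intro j hj
      have hexp : (fun ω => (S (N+1) ω)^j)
          = fun ω => ∑ i ∈ Finset.range (j+1),
              (S N ω)^i * (ζ N ω)^(j-i) * (j.choose i : ℝ) := by
        funext ω
        rw [hSsucc, add_pow]
      rw [hexp]
      apply integrable_finset_sum
      intro i hi
      have hi' : i ≤ j := Nat.lt_succ_iff.mp (Finset.mem_range.mp hi)
      have hind : IndepFun (fun ω => (S N ω)^i) (fun ω => (ζ N ω)^(j-i)) μ :=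
        (hSindep N).comp (measurable_id.pow_const i) (measurable_id.pow_const (j-i))
      exact (hind.integrable_mul (ih i (hi'.trans hj))
        (hintk N (j-i) ((Nat.sub_le j i).trans hj))).mul_const _
  -- the moment recurrence
  have hrec : ∀ N j, j ≤ ℓ → (∫ ω, (S (N+1) ω)^j ∂μ)
      = ∑ i ∈ Finset.range (j+1),
          (j.choose i : ℝ) * (∫ ω, (S N ω)^i ∂μ) * m (j - i) := by
    intro N j hj
    have hexp : (fun ω => (S (N+1) ω)^j)
        = fun ω => ∑ i ∈ Finset.range (j+1),
            (S N ω)^i * (ζ N ω)^(j-i) * (j.choose i : ℝ) := by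
      funext ω
      rw [hSsucc, add_pow]
    rw [show (∫ ω, (S (N+1) ω)^j ∂μ)
        = ∫ ω, ∑ i ∈ Finset.range (j+1),
            (S N ω)^i * (ζ N ω)^(j-i) * (j.choose i : ℝ) ∂μ from by rw [← hexp]]
    rw [integral_finset_sum]
    · apply Finset.sum_congr rfl
      intro i hi
      have hi' : i ≤ j := Nat.lt_succ_iff.mp (Finset.mem_range.mp hi)
      have hind : IndepFun (fun ω => (S N ω)^i) (fun ω => (ζ N ω)^(j-i)) μ :=
        (hSindep N).comp (measurable_id.pow_const i) (measurable_id.pow_const (j-i))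
      have hmul : (∫ a, S N a ^ i * ζ N a ^ (j - i) ∂μ)
          = (∫ ω, S N ω ^ i ∂μ) * ∫ ω, ζ N ω ^ (j - i) ∂μ :=
        hind.integral_fun_mul_eq_mul_integral (hSint N i (hi'.trans hj)).aestronglyMeasurable
          (hintk N (j-i) ((Nat.sub_le j i).trans hj)).aestronglyMeasurable
      rw [integral_mul_const, hmul, hmomk]
      ring
    · intro i hi
      have hi' : i ≤ j := Nat.lt_succ_iff.mp (Finset.mem_range.mp hi)
      have hind : IndepFun (fun ω => (S N ω)^i) (fun ω => (ζ N ω)^(j-i)) μ :=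
        (hSindep N).comp (measurable_id.pow_const i) (measurable_id.pow_const (j-i))
      exact (hind.integrable_mul (hSint N i (hi'.trans hj))
        (hintk N (j-i) ((Nat.sub_le j i).trans hj))).mul_const _
  -- main claim by strong induction
  have main : ∀ j, j ≤ ℓ → ∃ P : Polynomial ℝ, P.natDegree ≤ j / 2 ∧
      ∀ N : ℕ, (∫ ω, (S N ω)^j ∂μ) = P.eval (N : ℝ) := by
    intro j
    induction j using Nat.strong_induction_on with
    | _ j ih =>
    intro hj
    rcases j with _ | p
    · refine ⟨1, by simp, fun N => by simp⟩
    set j := p + 1 with hjdef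
    have H : ∀ i : ℕ, ∃ P : Polynomial ℝ, i < j →
        P.natDegree ≤ i / 2 ∧ ∀ N : ℕ, (∫ ω, (S N ω)^i ∂μ) = P.eval (N : ℝ) := by
      intro i
      by_cases h : i < j
      · obtain ⟨P, h1, h2⟩ := ih i h (h.le.trans hj)
        exact ⟨P, fun _ => ⟨h1, h2⟩⟩
      · exact ⟨0, fun hc => absurd hc h⟩
    choose f hf using H
    set Q : Polynomial ℝ :=
      ∑ i ∈ Finset.range p, C ((j.choose i : ℝ) * m (j - i)) * f i with hQdef
    have hdiff : ∀ N : ℕ, (∫ ω, (S (N+1) ω)^j ∂μ)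
        = (∫ ω, (S N ω)^j ∂μ) + Q.eval (N : ℝ) := by
      intro N
      rw [hrec N j hj]
      rw [show j + 1 = p + 2 from rfl, Finset.sum_range_succ, Finset.sum_range_succ]
      have e1 : ((j.choose (p+1) : ℝ)) * (∫ ω, (S N ω)^(p+1) ∂μ) * m (j - (p+1))
          = ∫ ω, (S N ω)^j ∂μ := by
        simp [hjdef, hm0]
      have e2 : ((j.choose p : ℝ)) * (∫ ω, (S N ω)^p ∂μ) * m (j - p) = 0 := by
        have : j - p = 1 := by omega
        rw [this, hm1]; ring
      rw [e1, e2, add_zero]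
      rw [add_comm]
      congr 1
      rw [hQdef, eval_finset_sum]
      apply Finset.sum_congr rfl
      intro i hi
      have hij : i < j := by
        have := Finset.mem_range.mp hi; omega
      rw [(hf i hij).2 N]
      simp
      ring
    have hQdeg : Q ≠ 0 → Q.natDegree + 1 ≤ j / 2 := by
      intro hQ0
      have hp1 : 1 ≤ p := by
        by_contra h
        apply hQ0
        have hp : p = 0 := by omega
        rw [hQdef, hp]
        simp
      have : Q.natDegree ≤ (p - 1) / 2 := by
        rw [hQdef]
        apply Polynomial.natDegree_sum_le_of_forall_le
        intro i hi
        have hi' : i ≤ p - 1 := by have := Finset.mem_range.mp hi; omega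
        refine (natDegree_C_mul_le _ _).trans ?_
        refine ((hf i (by omega)).1).trans ?_
        omega
      omega
    obtain ⟨P0, hP0deg, hP0zero, hP0⟩ := exists_discrete_antideriv Q.natDegree Q le_rfl
    refine ⟨P0 + C ((∫ ω, (S 0 ω)^j ∂μ) - P0.eval 0), ?_, ?_⟩
    · refine (natDegree_add_le _ _).trans ?_
      rw [natDegree_C]
      simp only [max_le_iff]
      constructor
      · by_cases hQ0 : Q = 0
        · rw [hP0zero hQ0]; simp
        · have := hQdeg hQ0
          omega
      · exact Nat.zero_le _
    · intro N
      induction N with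
      | zero => simp
      | succ N ihN =>
        rw [hdiff N, ihN]
        push_cast
        have := hP0 (N : ℝ)
        simp only [eval_add, eval_C]
        linarith
  obtain ⟨P, h1, h2⟩ := main ℓ le_rfl
  exact ⟨P, h1, fun N _ => h2 N⟩
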